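/- Let f be a graph invariant with values in a commutative ring R satisfying the deletion-contraction relation f(G) = A·f(G/e) + B·f(G−e) for e neither a loop nor an isthmus, f(H·K) = C·f(H)·f(K), f(T₁) = D, and f(L₁) = E. Then for the cycle graph Pₙ with n edges (n ≥ 1), (A − C·D)·f(Pₙ) = A^{n−1}·E·(A − C·D) + B·D·(A^{n−1} − (C·D)^{n−1}). -/

import Mathlib

/-- A finite multigraph (loops and parallel edges allowed), with a chosen
orientation of each edge given by source and target maps. -/
structure Multigraph where
  V : Type
  E : Type
  [fintypeV : Fintype V]
  [fintypeE : Fintype E]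
  [decEqV : DecidableEq V]
  [decEqE : DecidableEq E]
  src : E → V
  tgt : E → V

attribute [instance] Multigraph.fintypeV Multigraph.fintypeE
  Multigraph.decEqV Multigraph.decEqE

namespace Multigraph

variable (G : Multigraph)

/-- Two vertices are directly joined by an edge of the spanning subgraph `[G:S]`. -/
def connRel (S : Finset G.E) (a b : G.V) : Prop :=
  ∃ e ∈ S, (G.src e = a ∧ G.tgt e = b)

/-- The "same connected component of `[G:S]`" equivalence relation. -/
def connSetoid (S : Finset G.E) : Setoid G.V := Relation.EqvGen.setoid (G.connRel S)

/-- The set of connected components of the spanning subgraph `[G:S]`. -/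
def Comp (S : Finset G.E) : Type := Quotient (G.connSetoid S)

noncomputable instance (S : Finset G.E) : Fintype (G.Comp S) := by
  classical exact Quotient.fintype _

noncomputable instance (S : Finset G.E) : DecidableEq (G.Comp S) :=
  Classical.decEq _

/-- `b₀([G:S])`: the number of connected components of the spanning subgraph `[G:S]`. -/
noncomputable def b0 (S : Finset G.E) : ℕ := Fintype.card (G.Comp S)

/-- The simplicial boundary map `ℚ^S → ℚ^V`, sending an edge to (target − source). -/
noncomputable def boundary (S : Finset G.E) : ((↥S) → ℚ) →ₗ[ℚ] (G.V → ℚ) :=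
  ∑ e : ↥S, LinearMap.smulRight (LinearMap.proj e)
    (fun v => (if G.tgt e.1 = v then (1 : ℚ) else 0) - (if G.src e.1 = v then 1 else 0))

/-- `b₁([G:S])`: the first Betti number of `[G:S]`, i.e. the rank of its cycle space. -/
noncomputable def b1 (S : Finset G.E) : ℕ :=
  Module.finrank ℚ (LinearMap.ker (G.boundary S))

end Multigraph

namespace Multigraph

variable (G : Multigraph)

/-- The graph `G − e` obtained by deleting the edge `e`. -/
def deleteEdge (e : G.E) : Multigraph where
  V := G.V
  E := {e' : G.E // e' ≠ e}
  src := fun x => G.src x.1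
  tgt := fun x => G.tgt x.1

/-- The equivalence relation identifying the two endpoints of `e`. -/
def contractSetoid (e : G.E) : Setoid G.V :=
  Relation.EqvGen.setoid (fun a b => a = G.src e ∧ b = G.tgt e)

/-- The graph `G / e` obtained by contracting the edge `e` to a vertex. -/
noncomputable def contractEdge (e : G.E) : Multigraph where
  V := Quotient (G.contractSetoid e)
  E := {e' : G.E // e' ≠ e}
  fintypeV := by classical exact Quotient.fintype _
  decEqV := Classical.decEq _
  src := fun x => Quotient.mk (G.contractSetoid e) (G.src x.1)
  tgt := fun x => Quotient.mk (G.contractSetoid e) (G.tgt x.1)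

/-- The number of connected components of `G`. -/
noncomputable def b0full : ℕ := G.b0 Finset.univ

/-- `G` is connected. -/
def Connected : Prop := G.b0full = 1

/-- `e` is a loop: it joins a vertex to itself. -/
def IsLoop (e : G.E) : Prop := G.src e = G.tgt e

/-- `e` is an isthmus: deleting it increases the number of connected components. -/
noncomputable def IsIsthmus (e : G.E) : Prop := (G.deleteEdge e).b0full ≠ G.b0full

/-- `G` is a tree: connected and acyclic (`|E| + 1 = |V|`). -/
def IsTree : Prop := G.Connected ∧ Fintype.card G.E + 1 = Fintype.card G.V

/-- The degree of a vertex (loops counted twice). -/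
def degree (v : G.V) : ℕ :=
  (Finset.univ.filter (fun e => G.src e = v)).card +
    (Finset.univ.filter (fun e => G.tgt e = v)).card

/-- `G` is a simple cycle with `n` vertices and `n` edges. -/
def IsCycle (n : ℕ) : Prop :=
  G.Connected ∧ Fintype.card G.V = n ∧ Fintype.card G.E = n ∧ ∀ v, G.degree v = 2

/-- The one-point union `H·K`, obtained from the disjoint union of `H` and `K`
by identifying the vertex `h` of `H` with the vertex `k` of `K`. -/
def wedge (H K : Multigraph) (h : H.V) (k : K.V) : Multigraph where
  V := H.V ⊕ {v : K.V // v ≠ k}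
  E := H.E ⊕ K.E
  src := Sum.elim (fun e => Sum.inl (H.src e))
    (fun e => if hv : K.src e = k then Sum.inl h else Sum.inr ⟨K.src e, hv⟩)
  tgt := Sum.elim (fun e => Sum.inl (H.tgt e))
    (fun e => if hv : K.tgt e = k then Sum.inl h else Sum.inr ⟨K.tgt e, hv⟩)

/-- Isomorphism of multigraphs (edges may be matched with either orientation). -/
def Iso (H : Multigraph) : Prop :=
  ∃ (φ : G.V ≃ H.V) (ψ : G.E ≃ H.E), ∀ e : G.E,
    (H.src (ψ e) = φ (G.src e) ∧ H.tgt (ψ e) = φ (G.tgt e)) ∨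
    (H.src (ψ e) = φ (G.tgt e) ∧ H.tgt (ψ e) = φ (G.src e))

end Multigraph

namespace Multigraph

/-- transfer along a set closed under edges -/
lemma eqvGen_closed {G : Multigraph} (s : Set G.V)
    (hs : ∀ x : G.E, (G.src x ∈ s ↔ G.tgt x ∈ s)) {a b : G.V}
    (h : Relation.EqvGen (G.connRel Finset.univ) a b) : a ∈ s ↔ b ∈ s := by
  induction h with
  | rel a b hab => obtain ⟨x, -, rfl, rfl⟩ := hab; exact hs x
  | refl => exact Iff.rfl
  | symm _ _ _ ih => exact ih.symm
  | trans _ _ _ _ _ ih1 ih2 => exact ih1.trans ih2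

lemma connected_iff (G : Multigraph) :
    G.Connected ↔ (Nonempty G.V ∧ ∀ a b : G.V,
      Relation.EqvGen (G.connRel Finset.univ) a b) := by
  unfold Connected b0full b0
  rw [Fintype.card_eq_one_iff]
  constructor
  · rintro ⟨q, hq⟩
    obtain ⟨v, rfl⟩ := Quotient.exists_rep q
    refine ⟨⟨v⟩, fun a b => ?_⟩
    have : (Quotient.mk (G.connSetoid Finset.univ) a)
        = Quotient.mk (G.connSetoid Finset.univ) b := (hq _).trans (hq _).symm
    exact Quotient.exact this
  · rintro ⟨⟨v⟩, h⟩
    exact ⟨Quotient.mk _ v, fun q => Quotient.inductionOn q fun a => Quotient.sound (h a v)⟩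

lemma eqvGen_map {G H : Multigraph} (φ : G.V → H.V)
    (h : ∀ x : G.E, Relation.EqvGen (H.connRel Finset.univ) (φ (G.src x)) (φ (G.tgt x)))
    {a b : G.V} (hab : Relation.EqvGen (G.connRel Finset.univ) a b) :
    Relation.EqvGen (H.connRel Finset.univ) (φ a) (φ b) := by
  induction hab with
  | rel a b hab => obtain ⟨x, -, rfl, rfl⟩ := hab; exact h x
  | refl => exact Relation.EqvGen.refl _
  | symm _ _ _ ih => exact ih.symm
  | trans _ c _ _ _ ih1 ih2 => exact ih1.trans _ _ _ ih2

/-- counting: removing one element from a filtered count -/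
lemma card_filter_subtype (G : Multigraph) (e : G.E) (p : G.E → Prop) [DecidablePred p] :
    (Finset.univ.filter (fun x : {x : G.E // x ≠ e} => p x.1)).card
      + (if p e then 1 else 0) = (Finset.univ.filter p).card := by
  classical
  have h1 : (Finset.univ.filter (fun x : {x : G.E // x ≠ e} => p x.1)).card
      = (Finset.univ.filter (fun x : G.E => x ≠ e ∧ p x)).card := by
    rw [← Fintype.card_subtype, ← Fintype.card_subtype]
    exact Fintype.card_congr ((Equiv.subtypeSubtypeEquivSubtypeInter _ _))
  rw [h1]
  have h2 := Finset.card_filter_add_card_filter_not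
    (s := Finset.univ.filter p) (p := fun x : G.E => x = e)
  simp only [Finset.filter_filter] at h2
  have h3 : (Finset.univ.filter (fun x : G.E => p x ∧ x = e)).card = if p e then 1 else 0 := by
    split
    · rename_i hp
      rw [Finset.card_eq_one]
      refine ⟨e, by ext x; simp only [Finset.mem_filter, Finset.mem_univ, true_and,
        Finset.mem_singleton]; exact ⟨fun h => h.2, fun h => by subst h; exact ⟨hp, rfl⟩⟩⟩
    · rename_i hp
      rw [Finset.card_eq_zero]
      ext x
      simp only [Finset.mem_filter, Finset.mem_univ, true_and, Finset.notMem_empty, iff_false,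
        not_and]
      rintro h rfl; exact hp h
  rw [h3] at h2
  have h4 : (Finset.univ.filter (fun x : G.E => x ≠ e ∧ p x)).card
      = (Finset.univ.filter (fun x : G.E => p x ∧ ¬ x = e)).card := by
    congr 1; ext x; simp [Finset.mem_filter]; tauto
  omega

end Multigraph
namespace Multigraph

lemma degree_eq (G : Multigraph) (v : G.V) :
    G.degree v = (Finset.univ.filter (fun x => G.src x = v)).card
      + (Finset.univ.filter (fun x => G.tgt x = v)).card := rfl

lemma degree_deleteEdge (G : Multigraph) (e : G.E) (v : G.V) :
    (G.deleteEdge e).degree v + ((if G.src e = v then 1 else 0)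
      + (if G.tgt e = v then 1 else 0)) = G.degree v := by
  classical
  have h1 := G.card_filter_subtype e (fun x => G.src x = v)
  have h2 := G.card_filter_subtype e (fun x => G.tgt x = v)
  unfold degree deleteEdge
  simp only at h1 h2 ⊢
  omega

/-- handshake within a component -/
lemma sum_degree_even (G : Multigraph) (c : Finset G.V)
    (hc : ∀ x : G.E, (G.src x ∈ c ↔ G.tgt x ∈ c)) :
    ∑ v ∈ c, G.degree v = 2 * (Finset.univ.filter (fun x => G.src x ∈ c)).card := by
  classical
  have key : ∀ g : G.E → G.V, (Finset.univ.filter (fun x => g x ∈ c)).card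
      = ∑ v ∈ c, (Finset.univ.filter (fun x => g x = v)).card := by
    intro g
    rw [Finset.card_eq_sum_card_fiberwise
      (fun x hx => (Finset.mem_filter.mp hx).2 : ∀ x ∈ Finset.univ.filter (fun x => g x ∈ c), g x ∈ c)]
    refine Finset.sum_congr rfl fun v hv => ?_
    congr 1
    rw [Finset.filter_filter]
    ext x
    simp only [Finset.mem_filter, Finset.mem_univ, true_and, and_iff_right_iff_imp]
    rintro rfl; exact hv
  have hsrc := key G.src
  have htgt := key G.tgt
  have hst : (Finset.univ.filter (fun x => G.src x ∈ c))
      = (Finset.univ.filter (fun x => G.tgt x ∈ c)) := by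
    ext x; simp only [Finset.mem_filter, Finset.mem_univ, true_and]; exact hc x
  calc ∑ v ∈ c, G.degree v
      = (∑ v ∈ c, (Finset.univ.filter (fun x => G.src x = v)).card)
        + ∑ v ∈ c, (Finset.univ.filter (fun x => G.tgt x = v)).card := by
        simp only [degree_eq, Finset.sum_add_distrib]
    _ = 2 * (Finset.univ.filter (fun x => G.src x ∈ c)).card := by
        rw [← hsrc, ← htgt, ← hst]; ring

lemma sum_degree (G : Multigraph) :
    ∑ v : G.V, G.degree v = 2 * Fintype.card G.E := by
  classical
  have := G.sum_degree_even Finset.univ (by simp)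
  simpa using this

end Multigraph
namespace Multigraph

lemma card_ne_subtype {α : Type} [Fintype α] [DecidableEq α] (a : α) :
    Fintype.card {x : α // x ≠ a} = Fintype.card α - 1 := by
  classical
  rw [Fintype.card_subtype_compl (p := fun x => x = a), Fintype.card_subtype_eq]

/-- In a connected graph with ≥ 2 vertices and all degrees 2, no loops. -/
lemma cycle_no_loop {G : Multigraph} (hconn : G.Connected)
    (hdeg : ∀ v, G.degree v = 2) (hV : 2 ≤ Fintype.card G.V) (e : G.E) :
    ¬ G.IsLoop e := by
  classical
  intro hloop
  set v := G.src e with hv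
  have htv : G.tgt e = v := hloop.symm
  -- only edge at v is e
  have huniq : ∀ x : G.E, G.src x = v ∨ G.tgt x = v → x = e := by
    intro x hx
    by_contra hxe
    have hdv := hdeg v
    rw [degree_eq] at hdv
    have h1 : e ∈ Finset.univ.filter (fun x => G.src x = v) := by simp [hv]
    have h2 : e ∈ Finset.univ.filter (fun x => G.tgt x = v) := by simp [htv]
    have hc1 : 1 ≤ (Finset.univ.filter (fun x => G.src x = v)).card :=
      Finset.card_pos.mpr ⟨e, h1⟩
    have hc2 : 1 ≤ (Finset.univ.filter (fun x => G.tgt x = v)).card :=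
      Finset.card_pos.mpr ⟨e, h2⟩
    rcases hx with hx | hx
    · have : ({x, e} : Finset G.E) ⊆ Finset.univ.filter (fun x => G.src x = v) := by
        intro y hy
        simp only [Finset.mem_insert, Finset.mem_singleton] at hy
        rcases hy with rfl | rfl
        · simp [hx]
        · exact h1
      have := Finset.card_le_card this
      rw [Finset.card_insert_of_notMem (by simpa using hxe), Finset.card_singleton] at this
      omega
    · have : ({x, e} : Finset G.E) ⊆ Finset.univ.filter (fun x => G.tgt x = v) := by
        intro y hy
        simp only [Finset.mem_insert, Finset.mem_singleton] at hy
        rcases hy with rfl | rfl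
        · simp [hx]
        · exact h2
      have := Finset.card_le_card this
      rw [Finset.card_insert_of_notMem (by simpa using hxe), Finset.card_singleton] at this
      omega
  -- {v} is closed under edges
  have hclosed : ∀ x : G.E, (G.src x ∈ ({v} : Set G.V) ↔ G.tgt x ∈ ({v} : Set G.V)) := by
    intro x
    simp only [Set.mem_singleton_iff]
    constructor
    · intro h; have := huniq x (Or.inl h); subst this; exact htv
    · intro h; have := huniq x (Or.inr h); subst this; exact hv.symm
  obtain ⟨w, hw⟩ := Fintype.exists_ne_of_one_lt_card (by omega) v
  have := (connected_iff G).mp hconn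
  have hvw := this.2 w v
  have := (eqvGen_closed _ hclosed hvw).mpr rfl
  exact hw this

/-- an isolated-ish vertex characterization used for trees -/
lemma no_isolated {G : Multigraph} (hconn : G.Connected) (hV : 2 ≤ Fintype.card G.V)
    (v : G.V) : G.degree v ≠ 0 := by
  classical
  intro h0
  rw [degree_eq] at h0
  have hs : (Finset.univ.filter (fun x => G.src x = v)) = ∅ := by
    rw [← Finset.card_eq_zero]; omega
  have ht : (Finset.univ.filter (fun x => G.tgt x = v)) = ∅ := by
    rw [← Finset.card_eq_zero]; omega
  have hclosed : ∀ x : G.E, (G.src x ∈ ({v} : Set G.V) ↔ G.tgt x ∈ ({v} : Set G.V)) := by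
    intro x
    have h1 : G.src x ≠ v := by
      intro h; have : x ∈ Finset.univ.filter (fun x => G.src x = v) := by simp [h]
      rw [hs] at this; simp at this
    have h2 : G.tgt x ≠ v := by
      intro h; have : x ∈ Finset.univ.filter (fun x => G.tgt x = v) := by simp [h]
      rw [ht] at this; simp at this
    simp [h1, h2]
  obtain ⟨w, hw⟩ := Fintype.exists_ne_of_one_lt_card (by omega) v
  have := (connected_iff G).mp hconn
  have hvw := this.2 w v
  exact hw ((eqvGen_closed _ hclosed hvw).mpr rfl)

/-- Deleting an edge of a connected graph where all degrees are 2 keeps it connected. -/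
lemma deleteEdge_connected {G : Multigraph} (hconn : G.Connected)
    (hdeg : ∀ v, G.degree v = 2) (hV : 2 ≤ Fintype.card G.V) (e : G.E) :
    (G.deleteEdge e).Connected := by
  classical
  set H := G.deleteEdge e with hH
  have hne : G.src e ≠ G.tgt e := by
    intro h; exact cycle_no_loop hconn hdeg hV e h
  -- first: the endpoints of e are connected in H
  have hkey : Relation.EqvGen (H.connRel Finset.univ) (G.src e) (G.tgt e) := by
    by_contra hcon
    set c : Finset G.V :=
      Finset.univ.filter (fun w => Relation.EqvGen (H.connRel Finset.univ) (G.src e) w) with hc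
    have hsc : G.src e ∈ c := by simp [hc]; exact Relation.EqvGen.refl _
    have htc : G.tgt e ∉ c := by simp [hc]; exact hcon
    have hclosed : ∀ x : H.E, (H.src x ∈ c ↔ H.tgt x ∈ c) := by
      intro x
      show G.src x.1 ∈ c ↔ G.tgt x.1 ∈ c
      simp only [hc, Finset.mem_filter, Finset.mem_univ, true_and]
      constructor
      · intro h; exact h.trans _ _ _ (Relation.EqvGen.rel _ _ ⟨x, by simp; exact ⟨rfl, rfl⟩⟩)
      · intro h; exact h.trans _ _ _ (Relation.EqvGen.symm _ _ (Relation.EqvGen.rel _ _ ⟨x, by simp; exact ⟨rfl, rfl⟩⟩))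
    have heven : ∑ w ∈ c, H.degree w
        = 2 * (Finset.univ.filter (fun x : H.E => H.src x ∈ c)).card :=
      by convert H.sum_degree_even c hclosed <;> rfl
    -- compute the sum: 2 * |c| - 1
    have hdegH : ∀ w ∈ c, H.degree w + ((if G.src e = w then 1 else 0)
        + (if G.tgt e = w then 1 else 0)) = 2 := by
      intro w hw
      have := G.degree_deleteEdge e w
      rw [hdeg w] at this; exact this
    have hsum : (∑ w ∈ c, H.degree w) + 1 = 2 * c.card := by
      have : ∀ w ∈ c, H.degree w = 2 - (if G.src e = w then 1 else 0) := by
        intro w hw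
        have h2 := hdegH w hw
        have : G.tgt e ≠ w := fun h => htc (h ▸ hw)
        simp only [if_neg this] at h2
        omega
      rw [Finset.sum_congr rfl this]
      rw [← Finset.add_sum_erase _ _ hsc]
      have hrest : ∀ w ∈ c.erase (G.src e), (2 - (if G.src e = w then 1 else 0)) = 2 := by
        intro w hw
        rw [if_neg (fun h => (Finset.ne_of_mem_erase hw) h.symm)]
      rw [Finset.sum_congr rfl hrest, if_pos rfl, Finset.sum_const, smul_eq_mul,
        Finset.card_erase_of_mem hsc]
      have : 1 ≤ c.card := Finset.card_pos.mpr ⟨_, hsc⟩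
      omega
    rw [heven] at hsum
    omega
  -- now H is connected
  have hGconn := (connected_iff G).mp hconn
  rw [connected_iff]
  refine ⟨hGconn.1, fun a b => ?_⟩
  have := eqvGen_map (G := G) (H := H) id (fun x => ?_) (hGconn.2 a b)
  · exact this
  · by_cases hx : x = e
    · subst hx; exact hkey
    · exact Relation.EqvGen.rel _ _ ⟨⟨x, hx⟩, Finset.mem_univ _, rfl, rfl⟩

end Multigraph
namespace Multigraph

lemma contract_eqv_iff (G : Multigraph) (e : G.E) (a b : G.V) :
    Relation.EqvGen (fun a b => a = G.src e ∧ b = G.tgt e) a b ↔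
      (a = b ∨ ((a = G.src e ∨ a = G.tgt e) ∧ (b = G.src e ∨ b = G.tgt e))) := by
  constructor
  · intro h
    induction h with
    | rel a b hab => exact Or.inr ⟨Or.inl hab.1, Or.inr hab.2⟩
    | refl => exact Or.inl rfl
    | symm _ _ _ ih => tauto
    | trans a c b _ _ ih1 ih2 =>
        rcases ih1 with rfl | ⟨h1, h2⟩
        · exact ih2
        · rcases ih2 with rfl | ⟨h3, h4⟩
          · exact Or.inr ⟨h1, h2⟩
          · exact Or.inr ⟨h1, h4⟩
  · rintro (rfl | ⟨ha, hb⟩)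
    · exact Relation.EqvGen.refl _
    · have hst : Relation.EqvGen (fun a b => a = G.src e ∧ b = G.tgt e) (G.src e) (G.tgt e) :=
        Relation.EqvGen.rel _ _ ⟨rfl, rfl⟩
      have key : ∀ c, (c = G.src e ∨ c = G.tgt e) →
          Relation.EqvGen (fun a b => a = G.src e ∧ b = G.tgt e) c (G.src e) := by
        rintro c (rfl | rfl)
        · exact Relation.EqvGen.refl _
        · exact hst.symm _ _
      exact (key a ha).trans _ _ _ ((key b hb).symm _ _)

lemma contract_mk_eq_iff (G : Multigraph) (e : G.E) (a b : G.V) :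
    (Quotient.mk (G.contractSetoid e) a = Quotient.mk (G.contractSetoid e) b) ↔
      (a = b ∨ ((a = G.src e ∨ a = G.tgt e) ∧ (b = G.src e ∨ b = G.tgt e))) := by
  rw [← contract_eqv_iff]
  constructor
  · exact Quotient.exact
  · intro h
    exact Quotient.sound h

/-- The vertex set of the contraction, given that `e` is not a loop. -/
noncomputable def contractVEquiv (G : Multigraph) (e : G.E) (hne : G.src e ≠ G.tgt e) :
    Quotient (G.contractSetoid e) ≃ {w : G.V // w ≠ G.tgt e} where
  toFun := Quotient.lift (fun w => if h : w = G.tgt e then ⟨G.src e, hne⟩ else ⟨w, h⟩)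
    (by
      intro a b hab
      have h := (G.contract_eqv_iff e a b).mp hab
      rcases h with rfl | ⟨ha, hb⟩
      · rfl
      · rcases ha with rfl | rfl <;> rcases hb with rfl | rfl <;> simp [hne])
  invFun := fun w => Quotient.mk _ w.1
  left_inv := by
    refine Quotient.ind (fun a => ?_)
    show Quotient.mk (G.contractSetoid e)
        ((if h : a = G.tgt e then (⟨G.src e, hne⟩ : {w : G.V // w ≠ G.tgt e}) else ⟨a, h⟩)).1
      = Quotient.mk (G.contractSetoid e) a
    by_cases h : a = G.tgt e
    · subst h
      rw [dif_pos rfl]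
      exact Quotient.sound ((G.contract_eqv_iff e _ _).mpr (Or.inr (by tauto)))
    · rw [dif_neg h]
  right_inv := by
    rintro ⟨w, hw⟩
    simp only
    rw [Quotient.lift_mk, dif_neg hw]

lemma contract_card_V (G : Multigraph) (e : G.E) (hne : G.src e ≠ G.tgt e) :
    Fintype.card (G.contractEdge e).V = Fintype.card G.V - 1 := by
  classical
  have : Fintype.card (G.contractEdge e).V = Fintype.card {w : G.V // w ≠ G.tgt e} :=
    Fintype.card_congr (G.contractVEquiv e hne)
  rw [this, card_ne_subtype]

lemma contract_card_E (G : Multigraph) (e : G.E) :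
    Fintype.card (G.contractEdge e).E = Fintype.card G.E - 1 := by
  classical
  exact card_ne_subtype e

lemma contract_connected (G : Multigraph) (e : G.E) (hconn : G.Connected) :
    (G.contractEdge e).Connected := by
  classical
  set H := G.contractEdge e with hH
  have hGconn := (connected_iff G).mp hconn
  rw [connected_iff]
  constructor
  · exact ⟨Quotient.mk _ hGconn.1.some⟩
  · have key : ∀ a b : G.V, Relation.EqvGen (H.connRel Finset.univ)
        (Quotient.mk (G.contractSetoid e) a) (Quotient.mk (G.contractSetoid e) b) := by
      intro a b
      refine eqvGen_map (G := G) (H := H) (Quotient.mk (G.contractSetoid e))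
        (fun x => ?_) (hGconn.2 a b)
      by_cases hx : x = e
      · have : (Quotient.mk (G.contractSetoid e) (G.src x))
            = Quotient.mk (G.contractSetoid e) (G.tgt x) := by
          rw [hx]
          exact Quotient.sound (Relation.EqvGen.rel _ _ ⟨rfl, rfl⟩)
        rw [this]
        exact Relation.EqvGen.refl _
      · exact Relation.EqvGen.rel _ _ ⟨⟨x, hx⟩, Finset.mem_univ _, rfl, rfl⟩
    intro a b
    induction a using Quotient.ind
    induction b using Quotient.ind
    exact key _ _

lemma contract_degree (G : Multigraph) (e : G.E) (hne : G.src e ≠ G.tgt e)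
    (hdeg : ∀ v, G.degree v = 2) (q : (G.contractEdge e).V) :
    (G.contractEdge e).degree q = 2 := by
  classical
  refine Quotient.ind (motive := fun q => (G.contractEdge e).degree q = 2) (fun w => ?_) q
  show (G.contractEdge e).degree (Quotient.mk (G.contractSetoid e) w) = 2
  have hds := hdeg (G.src e); have hdt := hdeg (G.tgt e); have hdw := hdeg w
  rw [degree_eq] at hds hdt hdw
  erw [degree_eq]
  by_cases hw : w = G.src e ∨ w = G.tgt e
  · -- merged class
    have h1 : (Finset.univ.filter (fun x : (G.contractEdge e).E =>
          (G.contractEdge e).src x = Quotient.mk (G.contractSetoid e) w))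
        = (Finset.univ.filter (fun x : {x : G.E // x ≠ e} =>
            (G.src x.1 = G.src e ∨ G.src x.1 = G.tgt e))) := by
      refine Finset.filter_congr (fun x _ => ?_)
      erw [show (G.contractEdge e).src x = Quotient.mk (G.contractSetoid e) (G.src x.1) from rfl,
        contract_mk_eq_iff]
      constructor
      · rintro (h | ⟨h, -⟩)
        · rw [h]; exact hw
        · exact h
      · intro h; exact Or.inr ⟨h, hw⟩
    have h2 : (Finset.univ.filter (fun x : (G.contractEdge e).E =>
          (G.contractEdge e).tgt x = Quotient.mk (G.contractSetoid e) w))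
        = (Finset.univ.filter (fun x : {x : G.E // x ≠ e} =>
            (G.tgt x.1 = G.src e ∨ G.tgt x.1 = G.tgt e))) := by
      refine Finset.filter_congr (fun x _ => ?_)
      erw [show (G.contractEdge e).tgt x = Quotient.mk (G.contractSetoid e) (G.tgt x.1) from rfl,
        contract_mk_eq_iff]
      constructor
      · rintro (h | ⟨h, -⟩)
        · rw [h]; exact hw
        · exact h
      · intro h; exact Or.inr ⟨h, hw⟩
    erw [h1, h2]
    show Finset.card (α := {x : G.E // x ≠ e}) _ + Finset.card (α := {x : G.E // x ≠ e}) _ = 2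
    have hc1 := G.card_filter_subtype e (fun x => G.src x = G.src e ∨ G.src x = G.tgt e)
    have hc2 := G.card_filter_subtype e (fun x => G.tgt x = G.src e ∨ G.tgt x = G.tgt e)
    rw [if_pos (Or.inl rfl)] at hc1
    rw [if_pos (Or.inr rfl)] at hc2
    have hsplit : ∀ g : G.E → G.V,
        (Finset.univ.filter (fun x => g x = G.src e ∨ g x = G.tgt e)).card
          = (Finset.univ.filter (fun x => g x = G.src e)).card
            + (Finset.univ.filter (fun x => g x = G.tgt e)).card := by
      intro g
      rw [Finset.filter_or]
      apply Finset.card_union_of_disjoint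
      refine Finset.disjoint_left.mpr (fun x h1 h2 => ?_)
      simp only [Finset.mem_filter] at h1 h2
      exact hne (h1.2 ▸ h2.2 ▸ rfl)
    rw [hsplit] at hc1
    rw [hsplit] at hc2
    omega
  · push_neg at hw
    have h1 : (Finset.univ.filter (fun x : (G.contractEdge e).E =>
          (G.contractEdge e).src x = Quotient.mk (G.contractSetoid e) w))
        = (Finset.univ.filter (fun x : {x : G.E // x ≠ e} => G.src x.1 = w)) := by
      refine Finset.filter_congr (fun x _ => ?_)
      erw [show (G.contractEdge e).src x = Quotient.mk (G.contractSetoid e) (G.src x.1) from rfl,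
        contract_mk_eq_iff]
      constructor
      · rintro (h | ⟨-, h⟩)
        · exact h
        · exact absurd h (by tauto)
      · exact Or.inl
    have h2 : (Finset.univ.filter (fun x : (G.contractEdge e).E =>
          (G.contractEdge e).tgt x = Quotient.mk (G.contractSetoid e) w))
        = (Finset.univ.filter (fun x : {x : G.E // x ≠ e} => G.tgt x.1 = w)) := by
      refine Finset.filter_congr (fun x _ => ?_)
      erw [show (G.contractEdge e).tgt x = Quotient.mk (G.contractSetoid e) (G.tgt x.1) from rfl,
        contract_mk_eq_iff]
      constructor
      · rintro (h | ⟨-, h⟩)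
        · exact h
        · exact absurd h (by tauto)
      · exact Or.inl
    erw [h1, h2]
    show Finset.card (α := {x : G.E // x ≠ e}) _ + Finset.card (α := {x : G.E // x ≠ e}) _ = 2
    have hc1 := G.card_filter_subtype e (fun x => G.src x = w)
    have hc2 := G.card_filter_subtype e (fun x => G.tgt x = w)
    rw [if_neg (fun h => hw.1 h.symm)] at hc1
    rw [if_neg (fun h => hw.2 h.symm)] at hc2
    omega

end Multigraph
namespace Multigraph

/-- The one-edge tree on two vertices. -/
def K1graph : Multigraph where
  V := Bool
  E := Unit
  src := fun _ => false
  tgt := fun _ => true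

/-- The map collapsing the leaf `v` to its neighbour `u`. -/
def leafMap (T : Multigraph) (v u : T.V) (hu : u ≠ v) (w : T.V) : {w : T.V // w ≠ v} :=
  if h : w = v then ⟨u, hu⟩ else ⟨w, h⟩

/-- The tree obtained by dropping the leaf `v` with its pendant edge `e`. -/
def leafDrop (T : Multigraph) (v : T.V) (e : T.E) (u : T.V) (hu : u ≠ v) : Multigraph where
  V := {w : T.V // w ≠ v}
  E := {x : T.E // x ≠ e}
  src := fun x => T.leafMap v u hu (T.src x.1)
  tgt := fun x => T.leafMap v u hu (T.tgt x.1)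

lemma leaf_iso (T : Multigraph) (v : T.V) (e : T.E) (u : T.V) (hu : u ≠ v)
    (hends : (T.src e = v ∧ T.tgt e = u) ∨ (T.src e = u ∧ T.tgt e = v))
    (hnotv : ∀ x : T.E, x ≠ e → T.src x ≠ v ∧ T.tgt x ≠ v) :
    T.Iso (wedge (T.leafDrop v e u hu) K1graph ⟨u, hu⟩ false) := by
  classical
  have htne : (true : Bool) ≠ false := by simp
  refine ⟨⟨fun w => if h : w = v then Sum.inr ⟨true, htne⟩ else Sum.inl ⟨w, h⟩,
      Sum.elim (fun w => w.1) (fun _ => v), ?_, ?_⟩,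
    ⟨fun x => if h : x = e then Sum.inr () else Sum.inl ⟨x, h⟩,
      Sum.elim (fun x => x.1) (fun _ => e), ?_, ?_⟩, ?_⟩
  · intro w
    by_cases h : w = v
    · simp [h]
    · simp [h]; rfl
  · rintro (⟨w, h⟩ | ⟨b, hb⟩)
    · simp [h, Sum.elim]; rfl
    · have hb' : b = true := by
        revert hb
        show b ≠ false → b = true
        cases b <;> intro hb <;> [exact absurd rfl hb; rfl]
      subst hb'
      simp
      rfl
  · intro x
    by_cases h : x = e
    · simp [h]; rfl
    · simp [h]; rfl
  · rintro (⟨x, h⟩ | x)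
    · simp [h, Sum.elim]; rfl
    · have hx : x = () := rfl
      subst hx
      simp [Sum.elim]; rfl
  · intro x
    erw [Equiv.coe_fn_mk, Equiv.coe_fn_mk]
    by_cases h : x = e
    · subst h
      erw [dif_pos rfl]
      have hWsrc : (wedge (T.leafDrop v x u hu) K1graph ⟨u, hu⟩ false).src (Sum.inr ())
          = Sum.inl (⟨u, hu⟩ : {w : T.V // w ≠ v}) := by
        simp [wedge, K1graph]; rfl
      have hWtgt : (wedge (T.leafDrop v x u hu) K1graph ⟨u, hu⟩ false).tgt (Sum.inr ())
          = Sum.inr ⟨true, htne⟩ := by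
        simp [wedge, K1graph]
      rcases hends with ⟨h1, h2⟩ | ⟨h1, h2⟩
      · refine Or.inr ⟨?_, ?_⟩
        · erw [hWsrc, h2, dif_neg hu]; rfl
        · erw [hWtgt, h1, dif_pos rfl]
      · refine Or.inl ⟨?_, ?_⟩
        · erw [hWsrc, h1, dif_neg hu]; rfl
        · erw [hWtgt, h2, dif_pos rfl]
    · erw [dif_neg h]
      obtain ⟨hs, ht⟩ := hnotv x h
      refine Or.inl ⟨?_, ?_⟩
      · show Sum.inl (T.leafMap v u hu (T.src x)) = _
        erw [leafMap, dif_neg hs, dif_neg hs]; rfl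
      · show Sum.inl (T.leafMap v u hu (T.tgt x)) = _
        erw [leafMap, dif_neg ht, dif_neg ht]; rfl

end Multigraph
namespace Multigraph

lemma K1_card_V : Fintype.card K1graph.V = 2 := by
  show Fintype.card Bool = 2
  simp

lemma K1_card_E : Fintype.card K1graph.E = 1 := by
  show Fintype.card Unit = 1
  simp

lemma K1_no_loop : ∀ x : K1graph.E, ¬ K1graph.IsLoop x := by
  intro x h
  have : (false : Bool) = true := h
  simp at this

lemma tree_value {R : Type} [CommRing R] (C D : R) (f : Multigraph → R)
    (hiso : ∀ G H : Multigraph, G.Iso H → f G = f H)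
    (hwedge : ∀ (H K : Multigraph) (h : H.V) (k : K.V), f (wedge H K h k) = C * f H * f K)
    (hT1 : ∀ G : Multigraph, Fintype.card G.V = 2 → Fintype.card G.E = 1 →
      (∀ e, ¬ G.IsLoop e) → f G = D) :
    ∀ (k : ℕ) (T : Multigraph), T.IsTree → Fintype.card T.E = k + 1 →
      f T = D * (C * D) ^ k := by
  intro k
  induction k with
  | zero =>
    intro T hT hE
    have hV : Fintype.card T.V = 2 := by rw [← hT.2, hE]
    refine (hT1 T hV hE ?_).trans (by ring)
    intro x hx
    obtain ⟨w, hw⟩ := Fintype.exists_ne_of_one_lt_card (by omega) (T.src x)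
    have hsub : ∀ y z : T.E, y = z := by
      have : Fintype.card T.E ≤ 1 := by omega
      exact fun y z => Fintype.card_le_one_iff.mp this y z
    have hclosed : ∀ y : T.E, (T.src y ∈ ({w} : Set T.V) ↔ T.tgt y ∈ ({w} : Set T.V)) := by
      intro y
      rw [hsub y x]
      have h1 : T.src x ≠ w := fun h => hw h.symm
      have h2 : T.tgt x ≠ w := fun h => hw (h ▸ hx : T.src x = w).symm
      simp [h1, h2]
    have hGc := (connected_iff T).mp hT.1
    have hmem := (eqvGen_closed _ hclosed (hGc.2 w (T.src x))).mp rfl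
    exact hw (Eq.symm (by simpa using hmem))
  | succ k ih =>
    intro T hT hE
    have hconn := hT.1
    have hV : Fintype.card T.V = k + 3 := by have := hT.2; omega
    have hleaf : ∃ v, T.degree v = 1 := by
      by_contra hc
      push_neg at hc
      have h2 : ∀ v, 2 ≤ T.degree v := by
        intro v
        have ha := no_isolated hconn (by omega) v
        have hb := hc v
        omega
      have hle := Finset.card_nsmul_le_sum Finset.univ T.degree 2 (fun v _ => h2 v)
      rw [T.sum_degree, Finset.card_univ, smul_eq_mul] at hle
      omega
    obtain ⟨v, hv⟩ := hleaf
    have hv' := hv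
    rw [degree_eq] at hv'
    have pack : ∃ (e : T.E) (u : T.V) (hu : u ≠ v),
        ((T.src e = v ∧ T.tgt e = u) ∨ (T.src e = u ∧ T.tgt e = v)) ∧
        (∀ x : T.E, x ≠ e → T.src x ≠ v ∧ T.tgt x ≠ v) := by
      have hcases : ((Finset.univ.filter (fun x => T.src x = v)).card = 1
            ∧ (Finset.univ.filter (fun x => T.tgt x = v)).card = 0)
          ∨ ((Finset.univ.filter (fun x => T.src x = v)).card = 0
            ∧ (Finset.univ.filter (fun x => T.tgt x = v)).card = 1) := by omega
      rcases hcases with ⟨hA, hB⟩ | ⟨hA, hB⟩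
      · obtain ⟨e, he⟩ := Finset.card_eq_one.mp hA
        have hse : T.src e = v := by
          have : e ∈ Finset.univ.filter (fun x => T.src x = v) := he ▸ Finset.mem_singleton_self e
          simpa using this
        have hBe : ∀ x : T.E, T.tgt x ≠ v := by
          intro x hx
          have : x ∈ Finset.univ.filter (fun x => T.tgt x = v) := by simpa using hx
          rw [Finset.card_eq_zero.mp hB] at this
          simp at this
        refine ⟨e, T.tgt e, hBe e, Or.inl ⟨hse, rfl⟩, fun x hx => ⟨?_, hBe x⟩⟩
        intro hsx
        have : x ∈ Finset.univ.filter (fun x => T.src x = v) := by simpa using hsx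
        rw [he] at this
        exact hx (Finset.mem_singleton.mp this)
      · obtain ⟨e, he⟩ := Finset.card_eq_one.mp hB
        have hte : T.tgt e = v := by
          have : e ∈ Finset.univ.filter (fun x => T.tgt x = v) := he ▸ Finset.mem_singleton_self e
          simpa using this
        have hAe : ∀ x : T.E, T.src x ≠ v := by
          intro x hx
          have : x ∈ Finset.univ.filter (fun x => T.src x = v) := by simpa using hx
          rw [Finset.card_eq_zero.mp hA] at this
          simp at this
        refine ⟨e, T.src e, hAe e, Or.inr ⟨rfl, hte⟩, fun x hx => ⟨hAe x, ?_⟩⟩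
        intro htx
        have : x ∈ Finset.univ.filter (fun x => T.tgt x = v) := by simpa using htx
        rw [he] at this
        exact hx (Finset.mem_singleton.mp this)
    obtain ⟨e, u, hu, hends, hnotv⟩ := pack
    have hE' : Fintype.card (T.leafDrop v e u hu).E = k + 1 := by
      have h1 : Fintype.card (T.leafDrop v e u hu).E = Fintype.card {x : T.E // x ≠ e} :=
        Fintype.card_congr (Equiv.refl _)
      rw [h1, card_ne_subtype, hE]
      omega
    have hV' : Fintype.card (T.leafDrop v e u hu).V = k + 2 := by
      have h1 : Fintype.card (T.leafDrop v e u hu).V = Fintype.card {w : T.V // w ≠ v} :=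
        Fintype.card_congr (Equiv.refl _)
      rw [h1, card_ne_subtype, hV]
      omega
    have hmapv : ∀ w : {w : T.V // w ≠ v}, T.leafMap v u hu w.1 = w := by
      rintro ⟨w, h⟩
      rw [leafMap, dif_neg h]
    have hconn' : (T.leafDrop v e u hu).Connected := by
      rw [connected_iff]
      refine ⟨⟨⟨u, hu⟩⟩, fun a b => ?_⟩
      have hGc := (connected_iff T).mp hconn
      have key : ∀ p q : T.V, Relation.EqvGen ((T.leafDrop v e u hu).connRel Finset.univ)
          (T.leafMap v u hu p) (T.leafMap v u hu q) := by
        intro p q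
        refine eqvGen_map (G := T) (H := T.leafDrop v e u hu) (T.leafMap v u hu)
          (fun x => ?_) (hGc.2 p q)
        by_cases hx : x = e
        · have heq : T.leafMap v u hu (T.src x) = T.leafMap v u hu (T.tgt x) := by
            rcases hends with ⟨h1, h2⟩ | ⟨h1, h2⟩ <;>
              rw [hx, h1, h2, leafMap, leafMap] <;>
              simp [hu]
          rw [heq]
          exact Relation.EqvGen.refl _
        · exact Relation.EqvGen.rel _ _ ⟨⟨x, hx⟩, Finset.mem_univ _, rfl, rfl⟩
      have := key a.1 b.1
      rwa [hmapv a, hmapv b] at this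
    have htree' : (T.leafDrop v e u hu).IsTree := ⟨hconn', by rw [hE', hV']⟩
    have hfT' := ih (T.leafDrop v e u hu) htree' hE'
    have hK1 : f K1graph = D := hT1 K1graph K1_card_V K1_card_E K1_no_loop
    calc f T = f (wedge (T.leafDrop v e u hu) K1graph ⟨u, hu⟩ false) :=
        hiso _ _ (T.leaf_iso v e u hu hends hnotv)
      _ = C * f (T.leafDrop v e u hu) * f K1graph := hwedge _ _ _ _
      _ = D * (C * D) ^ (k + 1) := by rw [hfT', hK1]; ring

end Multigraph

open Multigraph in
/-- For a graph invariant `f` satisfying deletion–contraction, the one-point-union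
rule, `f(T₁) = D` and `f(L₁) = E`, the cycle `Pₙ` with `n ≥ 1` edges satisfies
`(A − C·D)·f(Pₙ) = A^(n−1)·E·(A − C·D) + B·D·(A^(n−1) − (C·D)^(n−1))`. -/
theorem value_of_cycle {R : Type} [CommRing R] (A B C D E : R) (f : Multigraph → R)
    (hiso : ∀ G H : Multigraph, G.Iso H → f G = f H)
    (hdc : ∀ (G : Multigraph) (e : G.E), ¬ G.IsLoop e → ¬ G.IsIsthmus e →
      f G = A * f (G.contractEdge e) + B * f (G.deleteEdge e))
    (hwedge : ∀ (H K : Multigraph) (h : H.V) (k : K.V),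
      f (Multigraph.wedge H K h k) = C * f H * f K)
    (hT1 : ∀ G : Multigraph, Fintype.card G.V = 2 → Fintype.card G.E = 1 →
      (∀ e, ¬ G.IsLoop e) → f G = D)
    (hL1 : ∀ G : Multigraph, Fintype.card G.V = 1 → Fintype.card G.E = 1 → f G = E)
    (n : ℕ) (hn : 1 ≤ n) (G : Multigraph) (hG : G.IsCycle n) :
    (A - C * D) * f G
      = A ^ (n - 1) * E * (A - C * D) + B * D * (A ^ (n - 1) - (C * D) ^ (n - 1)) := by
  classical
  induction n, hn using Nat.le_induction generalizing G with
  | base =>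
    have hfG : f G = E := hL1 G hG.2.1 hG.2.2.1
    rw [hfG]
    simp only [Nat.sub_self, pow_zero]
    ring
  | succ n hn IH =>
    obtain ⟨hconn, hV, hE, hdeg⟩ := hG
    obtain ⟨e⟩ : Nonempty G.E := Fintype.card_pos_iff.mp (by rw [hE]; omega)
    have hV2 : 2 ≤ Fintype.card G.V := by rw [hV]; omega
    have hloop : ¬ G.IsLoop e := cycle_no_loop hconn hdeg hV2 e
    have hne : G.src e ≠ G.tgt e := hloop
    have hdelconn : (G.deleteEdge e).Connected := deleteEdge_connected hconn hdeg hV2 e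
    have histh : ¬ G.IsIsthmus e := fun h => h (hdelconn.trans hconn.symm)
    -- the deleted graph is a tree with n edges
    have hdelE : Fintype.card (G.deleteEdge e).E = (n - 1) + 1 := by
      have h1 : Fintype.card (G.deleteEdge e).E = Fintype.card {x : G.E // x ≠ e} :=
        Fintype.card_congr (Equiv.refl _)
      rw [h1, card_ne_subtype, hE]
      omega
    have hdelV : Fintype.card (G.deleteEdge e).V = Fintype.card G.V :=
      Fintype.card_congr (Equiv.refl _)
    have hdeltree : (G.deleteEdge e).IsTree := by
      refine ⟨hdelconn, ?_⟩
      rw [hdelE, hdelV, hV]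
      omega
    have hfdel := tree_value C D f hiso hwedge hT1 (n - 1) (G.deleteEdge e) hdeltree hdelE
    -- the contracted graph is a cycle with n edges
    have hcyc : (G.contractEdge e).IsCycle n := by
      refine ⟨contract_connected G e hconn, ?_, ?_, contract_degree G e hne hdeg⟩
      · rw [contract_card_V G e hne, hV]
        omega
      · rw [contract_card_E G e, hE]
        omega
    have hIH := IH (G.contractEdge e) hcyc
    have hdc' := hdc G e hloop histh
    obtain ⟨m, rfl⟩ : ∃ m, n = m + 1 := ⟨n - 1, by omega⟩
    simp only [Nat.add_sub_cancel] at hIH hfdel ⊢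
    linear_combination (A - C*D) * hdc' + A * hIH + (B*(A - C*D)) * hfdel
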